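/- arXiv:1704.04598 — 3 statements merged into one kernel-verified Lean document; each statement's English description precedes it below -/
import Mathlib

section
/- Let (M²,g) be a Riemannian surface and T a symmetric (1,1)-tensor field whose eigenvalue functions λ₁ ≥ λ₂ are constant on M. If T is a Codazzi tensor field, then ∇T = 0. Moreover, if λ₁ > λ₂, then the Gaussian curvature of (M,g) vanishes identically. -/
/-- Abstract model of the `C^∞(M)`-module of (local) vector fields on an
`m`-dimensional Riemannian manifold, equipped with an orthonormal frame `E`,
the Levi-Civita connection `D`, and the derivation action `act` of vector
fields on smooth functions `F`. -/
structure RiemannianFrame (m : ℕ) where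
  F : Type
  V : Type
  [instCommRing : CommRing F]
  [instAlgebra : Algebra ℝ F]
  [instAddCommGroup : AddCommGroup V]
  [instModule : Module F V]
  g : V → V → F
  D : V → V → V
  act : V → F → F
  bracket : V → V → V
  E : Fin m → V
  g_symm : ∀ X Y, g X Y = g Y X
  g_addl : ∀ X Y Z, g (X + Y) Z = g X Z + g Y Z
  g_smull : ∀ (f : F) (X Y : V), g (f • X) Y = f * g X Y
  act_addf : ∀ (X : V) (f h : F), act X (f + h) = act X f + act X h
  act_mulf : ∀ (X : V) (f h : F), act X (f * h) = act X f * h + f * act X h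
  act_addX : ∀ (X Y : V) (f : F), act (X + Y) f = act X f + act Y f
  act_smulX : ∀ (f : F) (X : V) (h : F), act (f • X) h = f * act X h
  act_const : ∀ (X : V) (r : ℝ), act X (algebraMap ℝ F r) = 0
  D_addX : ∀ X Y Z, D (X + Y) Z = D X Z + D Y Z
  D_smulX : ∀ (f : F) (X Y : V), D (f • X) Y = f • D X Y
  D_addY : ∀ X Y Z, D X (Y + Z) = D X Y + D X Z
  D_leibniz : ∀ (X : V) (f : F) (Y : V), D X (f • Y) = act X f • Y + f • D X Y
  metric_compat : ∀ X Y Z, act X (g Y Z) = g (D X Y) Z + g Y (D X Z)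
  torsion_free : ∀ X Y, D X Y - D Y X = bracket X Y
  bracket_act : ∀ (X Y : V) (f : F),
    act (bracket X Y) f = act X (act Y f) - act Y (act X f)
  frame_orthonormal : ∀ i j, g (E i) (E j) = if i = j then 1 else 0
  frame_span : ∀ X, X = ∑ i, g X (E i) • E i

attribute [instance] RiemannianFrame.instCommRing RiemannianFrame.instAlgebra
  RiemannianFrame.instAddCommGroup RiemannianFrame.instModule

namespace RiemannianFrame

variable {m : ℕ} (R : RiemannianFrame m)

/-- The covariant derivative `(∇_X T)(Y)` of a `(1,1)`-tensor field `T`. -/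
def covT (T : R.V → R.V) (X Y : R.V) : R.V := R.D X (T Y) - T (R.D X Y)

/-- `T` is a `(1,1)`-tensor field: it is `C^∞(M)`-linear. -/
def IsTensor (T : R.V → R.V) : Prop :=
  (∀ X Y, T (X + Y) = T X + T Y) ∧ ∀ (f : R.F) (X : R.V), T (f • X) = f • T X

/-- `T` is symmetric with respect to the metric. -/
def IsSymmT (T : R.V → R.V) : Prop := ∀ X Y, R.g (T X) Y = R.g X (T Y)

/-- `T` is a Codazzi tensor field: `(∇_X T)(Y) = (∇_Y T)(X)`. -/
def IsCodazzi (T : R.V → R.V) : Prop := ∀ X Y, R.covT T X Y = R.covT T Y X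

/-- The trace of a `(1,1)`-tensor field. -/
def traceT (T : R.V → R.V) : R.F := ∑ i, R.g (T (R.E i)) (R.E i)

/-- The divergence of a `(1,1)`-tensor field, `div T = Σᵢ (∇_{Eᵢ}T)(Eᵢ)`. -/
def divT (T : R.V → R.V) : R.V := ∑ i, R.covT T (R.E i) (R.E i)

/-- The gradient of a function. -/
def gradF (f : R.F) : R.V := ∑ i, R.act (R.E i) f • R.E i

/-- The divergence of a vector field. -/
def divV (Z : R.V) : R.F := ∑ i, R.g (R.D (R.E i) Z) (R.E i)

/-- The geometric Laplacian `Δ f = -div(grad f)`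
(sign convention matching `Δ^R T = -trace ∇²T`). -/
def lapF (f : R.F) : R.F := - R.divV (R.gradF f)

/-- The pointwise inner product `⟨T,S⟩` of two `(1,1)`-tensor fields. -/
def innerTT (T S : R.V → R.V) : R.F :=
  ∑ i, ∑ j, R.g (T (R.E i)) (R.E j) * R.g (S (R.E i)) (R.E j)

/-- The pointwise squared norm `|T|²`. -/
def normT2 (T : R.V → R.V) : R.F := R.innerTT T T

/-- The pointwise inner product `⟨∇T, ∇S⟩` of the `(0,3)`-tensors `∇T`, `∇S`. -/
def innerNabla (T S : R.V → R.V) : R.F :=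
  ∑ i, R.innerTT (fun Y => R.covT T (R.E i) Y) (fun Y => R.covT S (R.E i) Y)

/-- The pointwise squared norm `|∇T|²`. -/
def normNabla2 (T : R.V → R.V) : R.F := R.innerNabla T T

/-- The second covariant derivative `(∇²T)(X,Y,Z) = (∇_X (∇T))(Y,Z)`. -/
def nabla2 (T : R.V → R.V) (X Y Z : R.V) : R.V :=
  R.D X (R.covT T Y Z) - R.covT T (R.D X Y) Z - R.covT T Y (R.D X Z)

/-- `trace(∇²T)`, as a `(1,1)`-tensor field. -/
def traceNabla2 (T : R.V → R.V) (X : R.V) : R.V := ∑ i, R.nabla2 T (R.E i) (R.E i) X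

/-- The rough Laplacian `Δ^R T = -trace ∇²T`. -/
def roughLap (T : R.V → R.V) (X : R.V) : R.V := - R.traceNabla2 T X

/-- The curvature tensor `R(X,Y)Z = ∇_X∇_Y Z - ∇_Y∇_X Z - ∇_{[X,Y]}Z`. -/
def curv (X Y Z : R.V) : R.V :=
  R.D X (R.D Y Z) - R.D Y (R.D X Z) - R.D (R.bracket X Y) Z

/-- A function is constant iff all its directional derivatives vanish
(`M` is assumed connected). -/
def IsConst (f : R.F) : Prop := ∀ X, R.act X f = 0

end RiemannianFrame

/-- The Gaussian curvature of a surface, `K = ⟨R(E₁,E₂)E₁, E₂⟩`. -/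
def RiemannianFrame.K (R : RiemannianFrame 2) : R.F :=
  R.g (R.curv (R.E 0) (R.E 1) (R.E 0)) (R.E 1)


/-- On a surface, if the eigenvalue functions `λ₁ ≥ λ₂` of a
symmetric `(1,1)`-tensor field `T` are constant (real numbers) and `T` is a
Codazzi tensor field, then `∇T = 0`; moreover if `λ₁ > λ₂` the Gaussian
curvature vanishes identically.  The (locally existing) orthonormal
eigenframe is `W₁, W₂`. -/
theorem stmt5 (R : RiemannianFrame 2) (T : R.V → R.V)
    (hT : R.IsTensor T) (hTsymm : R.IsSymmT T)
    (lam1 lam2 : ℝ) (hle : lam2 ≤ lam1)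
    (W1 W2 : R.V)
    (hW1 : R.g W1 W1 = 1) (hW2 : R.g W2 W2 = 1) (hW12 : R.g W1 W2 = 0)
    (hspan : ∀ X, X = R.g X W1 • W1 + R.g X W2 • W2)
    (heig1 : T W1 = algebraMap ℝ R.F lam1 • W1)
    (heig2 : T W2 = algebraMap ℝ R.F lam2 • W2)
    (hcod : R.IsCodazzi T) :
    (∀ X Y, R.covT T X Y = 0) ∧ (lam2 < lam1 → R.K = 0) := by
  classical
  obtain ⟨hTadd, hTsmul⟩ := hT
  set μ : R.F := algebraMap ℝ R.F lam1 with hmu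
  set ν : R.F := algebraMap ℝ R.F lam2 with hnu
  set ζ : R.F := μ - ν with hzeta
  set ω : R.V → R.F := fun X => R.g (R.D X W1) W2 with homega
  -- basic metric lemmas
  have g0l : ∀ Y : R.V, R.g 0 Y = 0 := by
    intro Y
    have : R.g ((0 : R.F) • (0 : R.V)) Y = 0 := by rw [R.g_smull]; ring
    simpa using this
  have gaddr : ∀ X Y Z : R.V, R.g X (Y + Z) = R.g X Y + R.g X Z := by
    intro X Y Z; rw [R.g_symm, R.g_addl, R.g_symm Y, R.g_symm Z]
  have gsmulr : ∀ (f : R.F) (X Y : R.V), R.g X (f • Y) = f * R.g X Y := by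
    intro f X Y; rw [R.g_symm, R.g_smull, R.g_symm]
  have h2 : ∀ a : R.F, a + a = 0 → a = 0 := by
    intro a ha
    have hu : IsUnit ((2 : ℝ) • (1 : R.F)) := by
      have : IsUnit (algebraMap ℝ R.F 2) :=
        (isUnit_iff_ne_zero.mpr (two_ne_zero)).map (algebraMap ℝ R.F)
      simpa [Algebra.algebraMap_eq_smul_one] using this
    have h' : ((2 : ℝ) • (1 : R.F)) * a = ((2 : ℝ) • (1 : R.F)) * 0 := by
      rw [mul_zero, smul_mul_assoc, one_mul, two_smul]
      exact ha
    exact hu.mul_left_cancel h'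
  have act_one : ∀ X : R.V, R.act X 1 = 0 := by
    intro X; have := R.act_const X 1; simpa using this
  have act_zero : ∀ X : R.V, R.act X (0 : R.F) = 0 := by
    intro X; have := R.act_const X 0; simpa using this
  have actmu : ∀ X : R.V, R.act X μ = 0 := fun X => R.act_const X lam1
  have actnu : ∀ X : R.V, R.act X ν = 0 := fun X => R.act_const X lam2
  have hW21 : R.g W2 W1 = 0 := by rw [R.g_symm]; exact hW12
  have hDW1W1 : ∀ X, R.g (R.D X W1) W1 = 0 := by
    intro X
    have h := R.metric_compat X W1 W1
    rw [hW1, act_one, R.g_symm W1 (R.D X W1)] at h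
    exact h2 _ h.symm
  have hDW2W2 : ∀ X, R.g (R.D X W2) W2 = 0 := by
    intro X
    have h := R.metric_compat X W2 W2
    rw [hW2, act_one, R.g_symm W2 (R.D X W2)] at h
    exact h2 _ h.symm
  have hDW2W1 : ∀ X, R.g (R.D X W2) W1 = - ω X := by
    intro X
    have h := R.metric_compat X W1 W2
    rw [hW12, act_zero, R.g_symm W1 (R.D X W2)] at h
    have := eq_neg_of_add_eq_zero_right h.symm
    rw [R.g_symm] at this ⊢
    simpa [homega] using this.symm ▸ rfl
  have hDW1 : ∀ X, R.D X W1 = ω X • W2 := by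
    intro X
    have h := hspan (R.D X W1)
    rw [hDW1W1 X, zero_smul, zero_add] at h
    exact h
  have hDW2 : ∀ X, R.D X W2 = (- ω X) • W1 := by
    intro X
    have h := hspan (R.D X W2)
    rw [hDW2W2 X, zero_smul, add_zero, hDW2W1 X] at h
    exact h
  have hTeq : ∀ X, T X = (R.g X W1 * μ) • W1 + (R.g X W2 * ν) • W2 := by
    intro X
    conv_lhs => rw [hspan X]
    rw [hTadd, hTsmul, hTsmul, heig1, heig2, smul_smul, smul_smul]
  have hact1 : ∀ X Y, R.act X (R.g Y W1) = R.g (R.D X Y) W1 + ω X * R.g Y W2 := by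
    intro X Y
    have h := R.metric_compat X Y W1
    rw [hDW1 X, gsmulr] at h
    exact h
  have hact2 : ∀ X Y, R.act X (R.g Y W2) = R.g (R.D X Y) W2 - ω X * R.g Y W1 := by
    intro X Y
    have h := R.metric_compat X Y W2
    rw [hDW2 X, gsmulr] at h
    rw [h]; ring
  -- the key formula for the covariant derivative of T
  have covT_eq : ∀ X Y, R.covT T X Y =
      (ζ * ω X * R.g Y W2) • W1 + (ζ * ω X * R.g Y W1) • W2 := by
    intro X Y
    show R.D X (T Y) - T (R.D X Y) = _
    rw [hTeq Y, hTeq (R.D X Y), R.D_addY, R.D_leibniz, R.D_leibniz,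
        hDW1 X, hDW2 X, R.act_mulf, R.act_mulf, actmu, actnu,
        hact1 X Y, hact2 X Y]
    rw [smul_smul, smul_smul]
    module
  -- Codazzi implies ζ * ω = 0
  have hom1 : ζ * ω W1 = 0 := by
    have h := hcod W1 W2
    rw [covT_eq, covT_eq] at h
    have h' := congrArg (fun v => R.g v W1) h
    simpa [R.g_addl, R.g_smull, hW1, hW21, hW2, hW12] using h'
  have hom2 : ζ * ω W2 = 0 := by
    have h := hcod W1 W2
    rw [covT_eq, covT_eq] at h
    have h' := congrArg (fun v => R.g v W2) h
    simpa [R.g_addl, R.g_smull, hW1, hW21, hW2, hW12] using h'.symm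
  have homlin : ∀ X, ω X = R.g X W1 * ω W1 + R.g X W2 * ω W2 := by
    intro X
    have hX : R.D X W1 = R.D (R.g X W1 • W1 + R.g X W2 • W2) W1 := by
      conv_lhs => rw [hspan X]
    show R.g (R.D X W1) W2 = _
    rw [hX, R.D_addX, R.D_smulX, R.D_smulX, R.g_addl, R.g_smull, R.g_smull]
  have hzω : ∀ X, ζ * ω X = 0 := by
    intro X
    rw [homlin X]
    calc ζ * (R.g X W1 * ω W1 + R.g X W2 * ω W2)
        = R.g X W1 * (ζ * ω W1) + R.g X W2 * (ζ * ω W2) := by ring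
      _ = 0 := by rw [hom1, hom2]; ring
  have main1 : ∀ X Y, R.covT T X Y = 0 := by
    intro X Y
    rw [covT_eq X Y]
    have e1 : ζ * ω X * R.g Y W2 = 0 := by linear_combination (R.g Y W2) * hzω X
    have e2 : ζ * ω X * R.g Y W1 = 0 := by linear_combination (R.g Y W1) * hzω X
    rw [e1, e2, zero_smul, zero_smul, add_zero]
  refine ⟨main1, ?_⟩
  intro hlt
  -- ζ is a unit, so ω vanishes
  have hzu : IsUnit ζ := by
    have : ζ = algebraMap ℝ R.F (lam1 - lam2) := by rw [map_sub]
    rw [this]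
    exact (isUnit_iff_ne_zero.mpr (sub_ne_zero.mpr (ne_of_gt hlt))).map (algebraMap ℝ R.F)
  have hω0 : ∀ X, ω X = 0 := by
    intro X
    exact hzu.mul_left_cancel (by rw [mul_zero]; exact hzω X)
  have hD1 : ∀ X, R.D X W1 = 0 := by
    intro X; rw [hDW1 X, hω0 X, zero_smul]
  have hD2 : ∀ X, R.D X W2 = 0 := by
    intro X; rw [hDW2 X, hω0 X, neg_zero, zero_smul]
  have curv0 : ∀ X Y Z, R.curv X Y Z = 0 := by
    intro X Y Z
    have key : ∀ (W : R.V), (∀ U, R.D U W = 0) → ∀ (f : R.F), R.curv X Y (f • W) = 0 := by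
      intro W hW f
      show R.D X (R.D Y (f • W)) - R.D Y (R.D X (f • W)) - R.D (R.bracket X Y) (f • W) = 0
      rw [R.D_leibniz Y f W, hW Y, smul_zero, add_zero,
          R.D_leibniz X (R.act Y f) W, hW X, smul_zero, add_zero,
          R.D_leibniz X f W, hW X, smul_zero, add_zero,
          R.D_leibniz Y (R.act X f) W, hW Y, smul_zero, add_zero,
          R.D_leibniz (R.bracket X Y) f W, hW _, smul_zero, add_zero,
          R.bracket_act]
      module
    have hadd : ∀ Z1 Z2, R.curv X Y (Z1 + Z2) = R.curv X Y Z1 + R.curv X Y Z2 := by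
      intro Z1 Z2
      show R.D X (R.D Y (Z1 + Z2)) - R.D Y (R.D X (Z1 + Z2)) - R.D (R.bracket X Y) (Z1 + Z2) = _
      rw [R.D_addY, R.D_addY, R.D_addY, R.D_addY, R.D_addY]
      show _ = R.D X (R.D Y Z1) - R.D Y (R.D X Z1) - R.D (R.bracket X Y) Z1
        + (R.D X (R.D Y Z2) - R.D Y (R.D X Z2) - R.D (R.bracket X Y) Z2)
      abel
    conv_lhs => rw [hspan Z]
    rw [hadd, key W1 hD1, key W2 hD2, add_zero]
  show R.g (R.curv (R.E 0) (R.E 1) (R.E 0)) (R.E 1) = 0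
  rw [curv0]
  exact g0l _
end

section
/- Let (M²,g) be an oriented Riemannian surface and T a symmetric (1,1)-tensor field. Then div T = grad t − Z, where t = trace T and Z is the globally defined vector field given in any local orthonormal frame {X₁,X₂} by Z = ⟨Z₁₂, X₂⟩X₁ − ⟨Z₁₂, X₁⟩X₂ with Z₁₂ = (∇_{X₁}T)(X₂) − (∇_{X₂}T)(X₁). -/
/-- The vector field `Z = ⟨Z₁₂,W₂⟩W₁ - ⟨Z₁₂,W₁⟩W₂`, where
`Z₁₂ = (∇_{W₁}T)(W₂) - (∇_{W₂}T)(W₁)`, computed in the frame `W₁, W₂`. -/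
def Zof (R : RiemannianFrame 2) (T : R.V → R.V) (W1 W2 : R.V) : R.V :=
  R.g (R.covT T W1 W2 - R.covT T W2 W1) W2 • W1 -
    R.g (R.covT T W1 W2 - R.covT T W2 W1) W1 • W2


namespace RiemannianFrame

variable {m : ℕ} (R : RiemannianFrame m)

lemma g_addr (X Y Z : R.V) : R.g X (Y + Z) = R.g X Y + R.g X Z := by
  rw [R.g_symm X (Y + Z), R.g_addl, R.g_symm Y X, R.g_symm Z X]

lemma g_smulr (f : R.F) (X Y : R.V) : R.g X (f • Y) = f * R.g X Y := by
  rw [R.g_symm X (f • Y), R.g_smull, R.g_symm Y X]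

lemma g_negl (X Y : R.V) : R.g (-X) Y = -(R.g X Y) := by
  rw [← neg_one_smul R.F X, R.g_smull]; ring

lemma g_subl (X Y Z : R.V) : R.g (X - Y) Z = R.g X Z - R.g Y Z := by
  rw [sub_eq_add_neg, R.g_addl, R.g_negl, sub_eq_add_neg]

lemma g_subr (X Y Z : R.V) : R.g X (Y - Z) = R.g X Y - R.g X Z := by
  rw [R.g_symm X (Y - Z), R.g_subl, R.g_symm Y X, R.g_symm Z X]

lemma Dskew (X : R.V) (i j : Fin m) :
    R.g (R.D X (R.E i)) (R.E j) + R.g (R.D X (R.E j)) (R.E i) = 0 := by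
  have h := R.metric_compat X (R.E i) (R.E j)
  have h0 : R.act X (R.g (R.E i) (R.E j)) = 0 := by
    rw [R.frame_orthonormal]
    by_cases hij : i = j
    · have h1 := R.act_const X 1
      rw [map_one] at h1
      rw [if_pos hij]; exact h1
    · have h1 := R.act_const X 0
      rw [map_zero] at h1
      rw [if_neg hij]; exact h1
  have hs := R.g_symm (R.E i) (R.D X (R.E j))
  linear_combination h0 - h - hs

variable (T : R.V → R.V)

lemma covT_addX (hT : R.IsTensor T) (X Y Z : R.V) :
    R.covT T (X + Y) Z = R.covT T X Z + R.covT T Y Z := by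
  simp only [covT, R.D_addX, hT.1]; abel

lemma covT_smulX (hT : R.IsTensor T) (f : R.F) (X Y : R.V) :
    R.covT T (f • X) Y = f • R.covT T X Y := by
  simp only [covT, R.D_smulX, hT.2, smul_sub]

lemma covT_addY (hT : R.IsTensor T) (X Y Z : R.V) :
    R.covT T X (Y + Z) = R.covT T X Y + R.covT T X Z := by
  simp only [covT, R.D_addY, hT.1]; abel

lemma covT_smulY (hT : R.IsTensor T) (f : R.F) (X Y : R.V) :
    R.covT T X (f • Y) = f • R.covT T X Y := by
  simp only [covT, hT.1, hT.2, R.D_leibniz, smul_sub]; abel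

lemma covT_symm23 (hTs : R.IsSymmT T) (X Y Z : R.V) :
    R.g (R.covT T X Y) Z = R.g (R.covT T X Z) Y := by
  have h1 := R.metric_compat X (T Y) Z
  have h2 := R.metric_compat X (T Z) Y
  have e1 : R.g (T Y) Z = R.g (T Z) Y := by rw [hTs Y Z, R.g_symm]
  have e1' := congrArg (R.act X) e1
  have e2 : R.g (T Y) (R.D X Z) = R.g (T (R.D X Z)) Y := by
    rw [hTs Y (R.D X Z), R.g_symm]
  have e3 : R.g (T (R.D X Y)) Z = R.g (T Z) (R.D X Y) := by
    rw [hTs (R.D X Y) Z, R.g_symm]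
  simp only [covT, R.g_subl]
  linear_combination -h1 + h2 + e1' - e2 - e3

end RiemannianFrame

namespace RiemannianFrame

variable (R : RiemannianFrame 2) (T : R.V → R.V)

lemma ext2 {X Y : R.V} (h0 : R.g X (R.E 0) = R.g Y (R.E 0))
    (h1 : R.g X (R.E 1) = R.g Y (R.E 1)) : X = Y := by
  rw [R.frame_span X, R.frame_span Y, Fin.sum_univ_two, Fin.sum_univ_two, h0, h1]

lemma gE00 : R.g (R.E 0) (R.E 0) = 1 := by rw [R.frame_orthonormal]; simp
lemma gE01 : R.g (R.E 0) (R.E 1) = 0 := by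
  rw [R.frame_orthonormal, if_neg (by decide)]
lemma gE10 : R.g (R.E 1) (R.E 0) = 0 := by
  rw [R.frame_orthonormal, if_neg (by decide)]
lemma gE11 : R.g (R.E 1) (R.E 1) = 1 := by rw [R.frame_orthonormal]; simp

lemma act_trace (hT : R.IsTensor T) (X : R.V) :
    R.act X (R.traceT T) =
      R.g (R.covT T X (R.E 0)) (R.E 0) + R.g (R.covT T X (R.E 1)) (R.E 1) := by
  have hpp := R.Dskew X 0 0
  have hss := R.Dskew X 1 1
  have hqr := R.Dskew X 0 1
  have e0 : R.D X (R.E 0) =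
      R.g (R.D X (R.E 0)) (R.E 0) • R.E 0 + R.g (R.D X (R.E 0)) (R.E 1) • R.E 1 :=
    (R.frame_span (R.D X (R.E 0))).trans (Fin.sum_univ_two _)
  have e1 : R.D X (R.E 1) =
      R.g (R.D X (R.E 1)) (R.E 0) • R.E 0 + R.g (R.D X (R.E 1)) (R.E 1) • R.E 1 :=
    (R.frame_span (R.D X (R.E 1))).trans (Fin.sum_univ_two _)
  have d0 : R.D X (T (R.E 0)) = R.covT T X (R.E 0) + T (R.D X (R.E 0)) := by
    simp only [covT]; abel
  have d1 : R.D X (T (R.E 1)) = R.covT T X (R.E 1) + T (R.D X (R.E 1)) := by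
    simp only [covT]; abel
  rw [traceT, Fin.sum_univ_two, R.act_addf, R.metric_compat, R.metric_compat,
    d0, d1, e0, e1]
  simp only [hT.1, hT.2, R.g_addl, R.g_smull, R.g_addr, R.g_smulr]
  linear_combination (R.g (T (R.E 0)) (R.E 0)) * hpp + (R.g (T (R.E 1)) (R.E 1)) * hss
    + (R.g (T (R.E 0)) (R.E 1) + R.g (T (R.E 1)) (R.E 0)) * hqr

lemma Zof_frame (hT : R.IsTensor T) (a b c d : R.F) (h : a * d - b * c = 1) :
    Zof R T (a • R.E 0 + b • R.E 1) (c • R.E 0 + d • R.E 1)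
      = Zof R T (R.E 0) (R.E 1) := by
  apply R.ext2
  · simp only [Zof, R.covT_addX T hT, R.covT_smulX T hT, R.covT_addY T hT,
      R.covT_smulY T hT, R.g_subl, R.g_addl, R.g_smull, R.g_addr, R.g_smulr,
      R.gE00, R.gE01, R.gE10, R.gE11, mul_one, mul_zero, add_zero, zero_add,
      sub_zero, zero_sub, one_mul]
    linear_combination ((R.g (R.covT T (R.E 0) (R.E 1)) (R.E 1)
      - R.g (R.covT T (R.E 1) (R.E 0)) (R.E 1)) * (a * d - b * c + 1)) * h
  · simp only [Zof, R.covT_addX T hT, R.covT_smulX T hT, R.covT_addY T hT,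
      R.covT_smulY T hT, R.g_subl, R.g_addl, R.g_smull, R.g_addr, R.g_smulr,
      R.gE00, R.gE01, R.gE10, R.gE11, mul_one, mul_zero, add_zero, zero_add,
      sub_zero, zero_sub, one_mul]
    linear_combination (-(R.g (R.covT T (R.E 0) (R.E 1)) (R.E 0)
      - R.g (R.covT T (R.E 1) (R.E 0)) (R.E 0)) * (a * d - b * c + 1)) * h

end RiemannianFrame

/-- On an oriented Riemannian surface, `div T = grad t - Z` for
any symmetric `(1,1)`-tensor field `T`, with `t = trace T`; moreover `Z` is
well defined, i.e. independent of the choice of positively oriented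
orthonormal frame (the change-of-frame matrix having determinant `1`). -/
theorem stmt6 (R : RiemannianFrame 2) (T : R.V → R.V)
    (hT : R.IsTensor T) (hTsymm : R.IsSymmT T) :
    R.divT T = R.gradF (R.traceT T) - Zof R T (R.E 0) (R.E 1) ∧
      ∀ W1 W2 : R.V,
        R.g W1 W1 = 1 → R.g W2 W2 = 1 → R.g W1 W2 = 0 →
        (∀ X, X = R.g X W1 • W1 + R.g X W2 • W2) →
        R.g W1 (R.E 0) * R.g W2 (R.E 1) - R.g W1 (R.E 1) * R.g W2 (R.E 0) = 1 →
        Zof R T W1 W2 = Zof R T (R.E 0) (R.E 1) := by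
  have ht0 := R.act_trace T hT (R.E 0)
  have ht1 := R.act_trace T hT (R.E 1)
  constructor
  · apply R.ext2
    · simp only [RiemannianFrame.divT, RiemannianFrame.gradF, Zof, Fin.sum_univ_two,
        ht0, ht1, R.g_subl, R.g_addl, R.g_smull, R.gE00, R.gE01, R.gE10, R.gE11,
        mul_one, mul_zero, add_zero, zero_add, sub_zero, zero_sub, one_mul]
      linear_combination R.covT_symm23 T hTsymm (R.E 1) (R.E 1) (R.E 0)
    · simp only [RiemannianFrame.divT, RiemannianFrame.gradF, Zof, Fin.sum_univ_two,
        ht0, ht1, R.g_subl, R.g_addl, R.g_smull, R.gE00, R.gE01, R.gE10, R.gE11,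
        mul_one, mul_zero, add_zero, zero_add, sub_zero, zero_sub, one_mul]
      linear_combination R.covT_symm23 T hTsymm (R.E 0) (R.E 0) (R.E 1)
  · intro W1 W2 _ _ _ _ hdet
    have e1 : W1 = R.g W1 (R.E 0) • R.E 0 + R.g W1 (R.E 1) • R.E 1 :=
      (R.frame_span W1).trans (Fin.sum_univ_two _)
    have e2 : W2 = R.g W2 (R.E 0) • R.E 0 + R.g W2 (R.E 1) • R.E 1 :=
      (R.frame_span W2).trans (Fin.sum_univ_two _)
    rw [e1, e2]
    exact R.Zof_frame T hT _ _ _ _ hdet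
end

section
/- Let (M²,g) be a Riemannian surface and T a symmetric (1,1)-tensor field satisfying grad(trace T) = 2 div T. Then the following are equivalent: (i) T is a Codazzi tensor field; (ii) trace T is constant; (iii) div T = 0. -/
namespace Stmt9Aux

open RiemannianFrame

section General

variable {m : ℕ} (R : RiemannianFrame m)

lemma g_zero_left (X : R.V) : R.g 0 X = 0 := by
  have h := R.g_addl 0 0 X
  rw [add_zero] at h
  exact right_eq_add.mp h

lemma g_neg_left (Y X : R.V) : R.g (-Y) X = - R.g Y X := by
  have h := R.g_addl (-Y) Y X
  rw [neg_add_cancel, g_zero_left] at h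
  exact eq_neg_of_add_eq_zero_left h.symm

lemma g_sub_left (A B X : R.V) : R.g (A - B) X = R.g A X - R.g B X := by
  rw [sub_eq_add_neg, R.g_addl, g_neg_left, sub_eq_add_neg]

lemma act_one (X : R.V) : R.act X (1 : R.F) = 0 := by
  have h := R.act_const X 1
  rwa [map_one] at h

lemma act_zero (X : R.V) : R.act X (0 : R.F) = 0 := by
  have h := R.act_const X 0
  rwa [map_zero] at h

lemma inv2 : (algebraMap ℝ R.F) (1/2) * 2 = 1 := by
  rw [show ((2 : R.F)) = algebraMap ℝ R.F 2 from (map_ofNat _ 2).symm, ← map_mul]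
  norm_num

lemma half_smul (v : R.V) (h : (2 : R.F) • v = 0) : v = 0 := by
  calc v = (1 : R.F) • v := (one_smul _ _).symm
    _ = ((algebraMap ℝ R.F) (1/2) * 2) • v := by rw [inv2]
    _ = (algebraMap ℝ R.F) (1/2) • ((2 : R.F) • v) := mul_smul _ _ _
    _ = 0 := by rw [h, smul_zero]

lemma half_eq (a : R.F) (h : a + a = 0) : a = 0 := by
  have h2 : (2 : R.F) * a = 0 := by rw [two_mul]; exact h
  calc a = (1 : R.F) * a := (one_mul _).symm
    _ = ((algebraMap ℝ R.F) (1/2) * 2) * a := by rw [inv2]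
    _ = (algebraMap ℝ R.F) (1/2) * ((2 : R.F) * a) := by ring
    _ = 0 := by rw [h2, mul_zero]

variable (T : R.V → R.V)

lemma covT_addX (hT : R.IsTensor T) (X X' Y : R.V) :
    R.covT T (X + X') Y = R.covT T X Y + R.covT T X' Y := by
  simp only [RiemannianFrame.covT, R.D_addX, hT.1]
  abel

lemma covT_smulX (hT : R.IsTensor T) (f : R.F) (X Y : R.V) :
    R.covT T (f • X) Y = f • R.covT T X Y := by
  simp only [RiemannianFrame.covT, R.D_smulX, hT.2, smul_sub]

lemma covT_addY (hT : R.IsTensor T) (X Y Y' : R.V) :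
    R.covT T X (Y + Y') = R.covT T X Y + R.covT T X Y' := by
  simp only [RiemannianFrame.covT, R.D_addY, hT.1]
  abel

lemma covT_smulY (hT : R.IsTensor T) (f : R.F) (X Y : R.V) :
    R.covT T X (f • Y) = f • R.covT T X Y := by
  simp only [RiemannianFrame.covT, hT.1, hT.2, R.D_leibniz, smul_sub]
  abel

lemma covT_symm23 (hTsymm : R.IsSymmT T) (Z A B : R.V) :
    R.g (R.covT T Z A) B = R.g (R.covT T Z B) A := by
  simp only [RiemannianFrame.covT, g_sub_left]
  have e1 : R.g (R.D Z (T A)) B = R.act Z (R.g (T A) B) - R.g (T A) (R.D Z B) := by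
    rw [R.metric_compat Z (T A) B]; ring
  have e2 : R.g (R.D Z (T B)) A = R.act Z (R.g (T B) A) - R.g (T B) (R.D Z A) := by
    rw [R.metric_compat Z (T B) A]; ring
  have k1 : R.g (T A) B = R.g (T B) A := by rw [hTsymm, R.g_symm]
  have k2 : R.g (T A) (R.D Z B) = R.g (T (R.D Z B)) A := by rw [hTsymm, R.g_symm]
  have k3 : R.g (T (R.D Z A)) B = R.g (T B) (R.D Z A) := by rw [hTsymm, R.g_symm]
  rw [e1, e2, k1, k2, k3]
  ring

end General

section Dim2

variable (R : RiemannianFrame 2) (T : R.V → R.V)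

lemma span2 (X : R.V) : X = R.g X (R.E 0) • R.E 0 + R.g X (R.E 1) • R.E 1 := by
  have h := R.frame_span X
  rwa [Fin.sum_univ_two] at h

lemma g00 : R.g (R.E 0) (R.E 0) = 1 := by simp [R.frame_orthonormal]

lemma g11 : R.g (R.E 1) (R.E 1) = 1 := by simp [R.frame_orthonormal]

lemma g01 : R.g (R.E 0) (R.E 1) = 0 := by
  rw [R.frame_orthonormal]; norm_num

lemma gD00 (X : R.V) : R.g (R.D X (R.E 0)) (R.E 0) = 0 := by
  have h := R.metric_compat X (R.E 0) (R.E 0)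
  rw [g00, act_one, R.g_symm (R.E 0) (R.D X (R.E 0))] at h
  exact half_eq R _ h.symm

lemma gD11 (X : R.V) : R.g (R.D X (R.E 1)) (R.E 1) = 0 := by
  have h := R.metric_compat X (R.E 1) (R.E 1)
  rw [g11, act_one, R.g_symm (R.E 1) (R.D X (R.E 1))] at h
  exact half_eq R _ h.symm

lemma gD10 (X : R.V) :
    R.g (R.D X (R.E 1)) (R.E 0) = - R.g (R.D X (R.E 0)) (R.E 1) := by
  have h := R.metric_compat X (R.E 0) (R.E 1)
  rw [g01, act_zero, R.g_symm (R.E 0) (R.D X (R.E 1))] at h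
  exact eq_neg_of_add_eq_zero_right h.symm

lemma Dframe0 (X : R.V) :
    R.D X (R.E 0) = R.g (R.D X (R.E 0)) (R.E 1) • R.E 1 := by
  have h := span2 R (R.D X (R.E 0))
  rwa [gD00, zero_smul, zero_add] at h

lemma Dframe1 (X : R.V) :
    R.D X (R.E 1) = (- R.g (R.D X (R.E 0)) (R.E 1)) • R.E 0 := by
  have h := span2 R (R.D X (R.E 1))
  rwa [gD11, zero_smul, add_zero, gD10] at h

lemma grad_pairing (f : R.F) (X : R.V) : R.act X f = R.g (R.gradF f) X := by
  have hX := span2 R X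
  conv_lhs => rw [hX]
  rw [R.act_addX, R.act_smulX, R.act_smulX]
  simp only [RiemannianFrame.gradF, Fin.sum_univ_two]
  rw [R.g_addl, R.g_smull, R.g_smull, R.g_symm X (R.E 0), R.g_symm X (R.E 1)]
  ring

lemma div_pairing (hTsymm : R.IsSymmT T) (X : R.V) :
    R.g (R.divT T) X
      = R.g (R.covT T (R.E 0) X) (R.E 0) + R.g (R.covT T (R.E 1) X) (R.E 1) := by
  have hdiv : R.divT T = R.covT T (R.E 0) (R.E 0) + R.covT T (R.E 1) (R.E 1) := by
    simp only [RiemannianFrame.divT, Fin.sum_univ_two]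
  rw [hdiv, R.g_addl, covT_symm23 R T hTsymm (R.E 0) (R.E 0) X,
    covT_symm23 R T hTsymm (R.E 1) (R.E 1) X]

lemma trace_pairing (hT : R.IsTensor T) (hTsymm : R.IsSymmT T) (X : R.V) :
    R.act X (R.traceT T)
      = R.g (R.covT T X (R.E 0)) (R.E 0) + R.g (R.covT T X (R.E 1)) (R.E 1) := by
  have htr : R.traceT T = R.g (T (R.E 0)) (R.E 0) + R.g (T (R.E 1)) (R.E 1) := by
    simp only [RiemannianFrame.traceT, Fin.sum_univ_two]
  rw [htr, R.act_addf, R.metric_compat, R.metric_compat]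
  simp only [RiemannianFrame.covT, g_sub_left]
  rw [Dframe0 R X, Dframe1 R X, hT.2, hT.2, R.g_smull, R.g_smull,
    R.g_symm (T (R.E 0)) (R.g (R.D X (R.E 0)) (R.E 1) • R.E 1),
    R.g_symm (T (R.E 1)) ((- R.g (R.D X (R.E 0)) (R.E 1)) • R.E 0),
    R.g_smull, R.g_smull]
  have hst : R.g (R.E 1) (T (R.E 0)) = R.g (T (R.E 1)) (R.E 0) := (hTsymm _ _).symm
  have hst2 : R.g (R.E 0) (T (R.E 1)) = R.g (T (R.E 0)) (R.E 1) :=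
    (hTsymm (R.E 0) (R.E 1)).symm
  have hst3 : R.g (T (R.E 1)) (R.E 0) = R.g (T (R.E 0)) (R.E 1) :=
    (hTsymm (R.E 1) (R.E 0)).trans (R.g_symm (R.E 1) (T (R.E 0)))
  rw [hst, hst2, hst3]
  ring

lemma keyid (hT : R.IsTensor T) (hTsymm : R.IsSymmT T) (X : R.V) :
    (R.g (R.covT T (R.E 0) X) (R.E 0) - R.g (R.covT T X (R.E 0)) (R.E 0))
      + (R.g (R.covT T (R.E 1) X) (R.E 1) - R.g (R.covT T X (R.E 1)) (R.E 1))
      = R.g (R.divT T) X - R.act X (R.traceT T) := by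
  rw [div_pairing R T hTsymm X, trace_pairing R T hT hTsymm X]
  ring

lemma covT_expand (hT : R.IsTensor T) (X Y : R.V) :
    R.covT T X Y =
      (R.g X (R.E 0) * R.g Y (R.E 0)) • R.covT T (R.E 0) (R.E 0)
      + (R.g X (R.E 0) * R.g Y (R.E 1)) • R.covT T (R.E 0) (R.E 1)
      + (R.g X (R.E 1) * R.g Y (R.E 0)) • R.covT T (R.E 1) (R.E 0)
      + (R.g X (R.E 1) * R.g Y (R.E 1)) • R.covT T (R.E 1) (R.E 1) := by
  have hX := span2 R X
  have hY := span2 R Y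
  conv_lhs => rw [hX, hY]
  simp only [covT_addX R T hT, covT_smulX R T hT, covT_addY R T hT,
    covT_smulY R T hT, smul_smul]
  module

end Dim2

end Stmt9Aux

open Stmt9Aux

/-- On a surface, for a symmetric `(1,1)`-tensor field `T`
satisfying `grad(trace T) = 2 div T` (holomorphicity of `⟨T(∂_z),∂_z⟩`), the
following are equivalent: (i) `T` is Codazzi; (ii) `trace T` is constant;
(iii) `div T = 0`. -/
theorem stmt9 (R : RiemannianFrame 2) (T : R.V → R.V)
    (hT : R.IsTensor T) (hTsymm : R.IsSymmT T)
    (hhol : R.gradF (R.traceT T) = (2 : R.F) • R.divT T) :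
    [R.IsCodazzi T, R.IsConst (R.traceT T), R.divT T = 0].TFAE := by
  have h32 : R.divT T = 0 → R.IsConst (R.traceT T) := by
    intro h3 X
    rw [grad_pairing R (R.traceT T) X, hhol, h3, smul_zero, g_zero_left]
  tfae_have 1 → 3 := by
    intro h1
    have hz : ∀ X, R.g (R.divT T) X = 0 := by
      intro X
      have hk := keyid R T hT hTsymm X
      rw [h1 (R.E 0) X, h1 (R.E 1) X, sub_self, sub_self, add_zero] at hk
      have ha : R.act X (R.traceT T) = 2 * R.g (R.divT T) X := by
        rw [grad_pairing R (R.traceT T) X, hhol, R.g_smull]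
      rw [ha] at hk
      linear_combination hk
    have h := span2 R (R.divT T)
    rwa [hz, hz, zero_smul, zero_smul, add_zero] at h
  tfae_have 3 → 2 := h32
  tfae_have 2 → 3 := by
    intro h2
    have h2' : ∀ X, R.act X (R.traceT T) = 0 := h2
    have h : R.gradF (R.traceT T) = 0 := by
      simp only [RiemannianFrame.gradF, Fin.sum_univ_two, h2', zero_smul, add_zero]
    rw [hhol] at h
    exact half_smul R _ h
  tfae_have 3 → 1 := by
    intro h3
    have h2 := h32 h3
    have hza : ∀ X, R.g (R.divT T) X - R.act X (R.traceT T) = 0 := by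
      intro X
      rw [h3, g_zero_left, h2 X, sub_zero]
    have hC : R.covT T (R.E 0) (R.E 1) = R.covT T (R.E 1) (R.E 0) := by
      have k1 := keyid R T hT hTsymm (R.E 1)
      rw [hza, sub_self, add_zero] at k1
      have w0 : R.g (R.covT T (R.E 0) (R.E 1)) (R.E 0)
          = R.g (R.covT T (R.E 1) (R.E 0)) (R.E 0) := by
        linear_combination k1
      have k0 := keyid R T hT hTsymm (R.E 0)
      rw [hza, sub_self, zero_add] at k0
      have w1 : R.g (R.covT T (R.E 0) (R.E 1)) (R.E 1)
          = R.g (R.covT T (R.E 1) (R.E 0)) (R.E 1) := by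
        linear_combination -k0
      have e1 := span2 R (R.covT T (R.E 0) (R.E 1))
      have e2 := span2 R (R.covT T (R.E 1) (R.E 0))
      rw [e1, e2, w0, w1]
    intro X Y
    rw [covT_expand R T hT X Y, covT_expand R T hT Y X, hC]
    module
  tfae_finish
end
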